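/- Exact second moment of the half-dithered quantization error (scalar case): Let Δ > 0 and y ∈ ℝ, and let u be uniformly distributed on (−1/2, 1/2). Write f ∈ [0, 1/2] for the distance from y/Δ to the nearest integer. Then the expectation over u of (Δ·round(y/Δ + u) − y)² equals Δ²·f·(1 − f); in particular it is at most Δ²/4. -/

import Mathlib

open MeasureTheory Set intervalIntegral

lemma hdq_piece (a b : ℝ) (hab : a ≤ b) (F : ℝ → ℝ) (C : ℝ)
    (h : ∀ u ∈ Set.Ioo a b, F u = C) :
    IntervalIntegrable F volume a b ∧ (∫ u in a..b, F u) = (b - a) * C := by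
  have h' : ∀ᵐ x : ℝ ∂volume, x ∈ Set.uIoc a b → F x = C := by
    have hb : ∀ᵐ u : ℝ, u ≠ b := by rw [ae_iff]; simp
    filter_upwards [hb] with u hu hmem
    rw [Set.uIoc_of_le hab] at hmem
    exact h u ⟨hmem.1, lt_of_le_of_ne hmem.2 hu⟩
  have hae : F =ᵐ[volume.restrict (Set.uIoc a b)] (fun _ => C) :=
    (ae_restrict_iff' measurableSet_uIoc).mpr h'
  refine ⟨(_root_.intervalIntegrable_const (c := C)).congr_ae hae.symm, ?_⟩
  rw [intervalIntegral.integral_congr_ae h', intervalIntegral.integral_const,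
    smul_eq_mul]

theorem half_dithered_quantizer_second_moment (Δ y f : ℝ) (hΔ : 0 < Δ)
    (hf : f = |y / Δ - (round (y / Δ) : ℝ)|) :
    (∫ u in (-(1/2) : ℝ)..(1/2), (Δ * (round (y / Δ + u) : ℝ) - y) ^ 2)
      = Δ ^ 2 * f * (1 - f) ∧
    (∫ u in (-(1/2) : ℝ)..(1/2), (Δ * (round (y / Δ + u) : ℝ) - y) ^ 2) ≤ Δ ^ 2 / 4 := by
  set r : ℤ := round (y / Δ) with hr
  set t : ℝ := y / Δ - (r : ℝ) with ht
  have hΔ' : Δ ≠ 0 := ne_of_gt hΔ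
  have hy : y = Δ * (t + r) := by
    have h1 : t + (r : ℝ) = y / Δ := by rw [ht]; ring
    rw [h1]; field_simp
  have hre : (r : ℝ) = ((⌊y / Δ + 1 / 2⌋ : ℤ) : ℝ) := by
    exact_mod_cast congrArg (fun z : ℤ => (z : ℝ)) (round_eq (y / Δ))
  have htlb : -(1/2) ≤ t := by
    have h1 : ((⌊y / Δ + 1 / 2⌋ : ℤ) : ℝ) ≤ y / Δ + 1/2 := Int.floor_le _
    rw [ht, hre]; linarith
  have htub : t < 1/2 := by
    have h2 : y / Δ + 1/2 < (⌊y / Δ + 1 / 2⌋ : ℤ) + 1 := Int.lt_floor_add_one _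
    rw [ht, hre]; linarith
  have hf0 : 0 ≤ f := hf ▸ abs_nonneg _
  have hf2 : f ≤ 1/2 := by
    rw [hf]; exact abs_sub_round (y / Δ)
  clear_value t
  have hround : ∀ (m : ℤ) (u : ℝ), (m : ℝ) ≤ t + u + 1/2 → t + u + 1/2 < (m : ℝ) + 1 →
      round (t + u) = m := by
    intro m u h1 h2
    rw [round_eq, Int.floor_eq_iff]
    exact ⟨h1, by linarith⟩
  have hG : ∀ u : ℝ, (Δ * (round (y / Δ + u) : ℝ) - y) ^ 2
      = (Δ * ((round (t + u) : ℝ) - t)) ^ 2 := by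
    intro u
    have h1 : y / Δ + u = (t + u) + (r : ℝ) := by rw [ht]; ring
    rw [h1, round_add_intCast]
    push_cast
    rw [hy]; ring
  have hGint : (∫ u in (-(1/2) : ℝ)..(1/2), (Δ * (round (y / Δ + u) : ℝ) - y) ^ 2)
      = ∫ u in (-(1/2) : ℝ)..(1/2), (Δ * ((round (t + u) : ℝ) - t)) ^ 2 := by
    simp only [hG]
  set G : ℝ → ℝ := fun u => (Δ * ((round (t + u) : ℝ) - t)) ^ 2 with hGdef
  have key : (∫ u in (-(1/2) : ℝ)..(1/2), (Δ * (round (y / Δ + u) : ℝ) - y) ^ 2)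
      = Δ ^ 2 * f * (1 - f) := by
    rw [hGint]
    rcases le_or_gt 0 t with h0 | h0
    · have hft : f = t := by rw [hf, abs_of_nonneg h0]
      set c : ℝ := 1/2 - t with hc
      clear_value c
      have h1 : (-(1/2) : ℝ) ≤ c := by rw [hc]; linarith
      have h2 : c ≤ (1/2 : ℝ) := by rw [hc]; linarith
      obtain ⟨i1, e1⟩ := hdq_piece (-(1/2)) c h1 G ((Δ * ((0 : ℝ) - t)) ^ 2) (by
        intro u hu
        have hrv : round (t + u) = 0 := hround 0 u
          (by push_cast; simp only [hc] at hu; linarith [hu.1, hu.2])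
          (by push_cast; simp only [hc] at hu; linarith [hu.1, hu.2])
        simp [hGdef, hrv])
      obtain ⟨i2, e2⟩ := hdq_piece c (1/2) h2 G ((Δ * ((1 : ℝ) - t)) ^ 2) (by
        intro u hu
        have hrv : round (t + u) = 1 := hround 1 u
          (by push_cast; simp only [hc] at hu; linarith [hu.1, hu.2])
          (by push_cast; simp only [hc] at hu; linarith [hu.1, hu.2])
        simp [hGdef, hrv])
      rw [← intervalIntegral.integral_add_adjacent_intervals i1 i2, e1, e2, hft, hc]
      ring
    · have hft : f = -t := by rw [hf, abs_of_neg h0]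
      set c : ℝ := -(1/2) - t with hc
      clear_value c
      have h1 : (-(1/2) : ℝ) ≤ c := by rw [hc]; linarith
      have h2 : c ≤ (1/2 : ℝ) := by rw [hc]; linarith
      obtain ⟨i1, e1⟩ := hdq_piece (-(1/2)) c h1 G ((Δ * ((-1 : ℝ) - t)) ^ 2) (by
        intro u hu
        have hrv : round (t + u) = -1 := hround (-1) u
          (by push_cast; simp only [hc] at hu; linarith [hu.1, hu.2])
          (by push_cast; simp only [hc] at hu; linarith [hu.1, hu.2])
        simp only [hGdef, hrv]; push_cast; ring)
      obtain ⟨i2, e2⟩ := hdq_piece c (1/2) h2 G ((Δ * ((0 : ℝ) - t)) ^ 2) (by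
        intro u hu
        have hrv : round (t + u) = 0 := hround 0 u
          (by push_cast; simp only [hc] at hu; linarith [hu.1, hu.2])
          (by push_cast; simp only [hc] at hu; linarith [hu.1, hu.2])
        simp [hGdef, hrv])
      rw [← intervalIntegral.integral_add_adjacent_intervals i1 i2, e1, e2, hft, hc]
      ring
  refine ⟨key, ?_⟩
  rw [key]
  nlinarith [sq_nonneg (Δ * (1 - 2 * f)), sq_nonneg Δ]
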